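/- Let X_1, X_2, ... be i.i.d. nonnegative random variables with density Λ^{-1}φ where φ : [0,∞) → [0,∞) satisfies Λ = ∫_0^∞ φ(s) ds < ∞ and ∫_0^∞ s^q φ(s) ds < ∞ for some q ≥ 1. Then for all n ≥ 1 and r ≥ 1, ∫_r^∞ √s · φ^{*n}(s) ds ≤ C Λ^n n^q r^{1/2 - q}, where φ^{*n} denotes the n-fold convolution of φ and C depends only on φ and q. -/

import Mathlib

open MeasureTheory

/-- Convolution f*g(t) = ∫_0^t f(t−s) g(s) ds (vanishing for t ≤ 0). -/
noncomputable def conv (f g : ℝ → ℝ) (t : ℝ) : ℝ :=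
  ∫ s in Set.Ioc 0 t, f (t - s) * g s

/-- n-fold convolution φ^{*n} of φ (for n ≥ 1; the value at n = 0 is irrelevant here). -/
noncomputable def convIter (φ : ℝ → ℝ) : ℕ → ℝ → ℝ
  | 0 => fun _ => 0
  | 1 => φ
  | n + 2 => conv φ (convIter φ (n + 1))

open Set ENNReal

private lemma conv_meas {f g : ℝ → ℝ} (hf : Measurable f) (hg : Measurable g) :
    Measurable (conv f g) := by
  have hset : MeasurableSet {p : ℝ × ℝ | 0 < p.2 ∧ p.2 ≤ p.1} :=
    (measurableSet_lt measurable_const measurable_snd).inter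
      (measurableSet_le measurable_snd measurable_fst)
  have hFm : Measurable ({p : ℝ × ℝ | 0 < p.2 ∧ p.2 ≤ p.1}.indicator
      fun p : ℝ × ℝ => f (p.1 - p.2) * g p.2) :=
    ((hf.comp (measurable_fst.sub measurable_snd)).mul (hg.comp measurable_snd)).indicator hset
  have h1 : conv f g = fun t => ∫ s, ({p : ℝ × ℝ | 0 < p.2 ∧ p.2 ≤ p.1}.indicator
      (fun p : ℝ × ℝ => f (p.1 - p.2) * g p.2)) (t, s) := by
    funext t
    rw [conv, ← integral_indicator measurableSet_Ioc]
    congr 1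
  rw [h1]
  exact (hFm.stronglyMeasurable.integral_prod_right').measurable

private lemma convIter_meas {φ : ℝ → ℝ} (hφ : Measurable φ) : ∀ n, Measurable (convIter φ n)
  | 0 => measurable_const
  | 1 => hφ
  | (n+2) => conv_meas hφ (convIter_meas hφ (n+1))

private lemma conv_nonneg' {f g : ℝ → ℝ} (hf : ∀ s, 0 ≤ f s) (hg : ∀ s, 0 ≤ g s) (t : ℝ) :
    0 ≤ conv f g t :=
  setIntegral_nonneg measurableSet_Ioc fun s _ => mul_nonneg (hf _) (hg _)

private lemma convIter_nonneg {φ : ℝ → ℝ} (hφ : ∀ s, 0 ≤ φ s) : ∀ n t, 0 ≤ convIter φ n t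
  | 0, _ => le_refl 0
  | 1, t => hφ t
  | (n+2), t => conv_nonneg' hφ (fun s => convIter_nonneg hφ (n+1) s) t

private lemma conv_lint_le
    {w f g : ℝ → ℝ} (hw : Measurable w) (hwnn : ∀ t, 0 < t → 0 ≤ w t)
    (hf : Measurable f) (hfnn : ∀ s, 0 ≤ f s) (hg : Measurable g) (hgnn : ∀ s, 0 ≤ g s) :
    ∫⁻ t in Set.Ioi 0, ENNReal.ofReal (w t * conv f g t)
      ≤ ∫⁻ s in Set.Ioi 0, ENNReal.ofReal (g s) *
          ∫⁻ u in Set.Ioi 0, ENNReal.ofReal (w (u + s) * f u) := by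
  have hconv : ∀ (f g : ℝ → ℝ) (t : ℝ), conv f g t = ∫ s in Set.Ioc 0 t, f (t - s) * g s :=
    fun _ _ _ => rfl
  set D : Set (ℝ × ℝ) := {p : ℝ × ℝ | 0 < p.2 ∧ p.2 ≤ p.1} with hD
  have hDm : MeasurableSet D :=
    (measurableSet_lt measurable_const measurable_snd).inter
      (measurableSet_le measurable_snd measurable_fst)
  set K : ℝ × ℝ → ℝ≥0∞ := D.indicator fun p =>
    ENNReal.ofReal (w p.1) * (ENNReal.ofReal (f (p.1 - p.2)) * ENNReal.ofReal (g p.2)) with hK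
  have hKm : Measurable K := by
    refine Measurable.indicator ?_ hDm
    exact ((hw.comp measurable_fst).ennreal_ofReal).mul
      (((hf.comp (measurable_fst.sub measurable_snd)).ennreal_ofReal).mul
        ((hg.comp measurable_snd).ennreal_ofReal))
  -- Step A
  have hA : ∫⁻ t in Set.Ioi 0, ENNReal.ofReal (w t * conv f g t) ≤ ∫⁻ t, ∫⁻ s, K (t, s) := by
    rw [← lintegral_indicator measurableSet_Ioi]
    refine lintegral_mono fun t => ?_
    by_cases ht : t ∈ Set.Ioi (0:ℝ)
    swap
    · rw [Set.indicator_of_notMem ht]; exact zero_le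
    rw [Set.indicator_of_mem ht]
    have ht0 : 0 < t := ht
    have step1 : ENNReal.ofReal (conv f g t) ≤ ∫⁻ s in Set.Ioc 0 t,
        ENNReal.ofReal (f (t - s)) * ENNReal.ofReal (g s) := by
      by_cases hint : IntegrableOn (fun s => f (t - s) * g s) (Set.Ioc 0 t)
      · rw [hconv, ofReal_integral_eq_lintegral_ofReal hint
          (Filter.Eventually.of_forall fun s => mul_nonneg (hfnn _) (hgnn _))]
        refine lintegral_mono fun s => ?_
        rw [ENNReal.ofReal_mul (hfnn _)]
      · rw [hconv, integral_undef hint]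
        simp
    calc ENNReal.ofReal (w t * conv f g t)
        = ENNReal.ofReal (w t) * ENNReal.ofReal (conv f g t) := by
          rw [ENNReal.ofReal_mul (hwnn t ht0)]
      _ ≤ ENNReal.ofReal (w t) * ∫⁻ s in Set.Ioc 0 t,
            ENNReal.ofReal (f (t - s)) * ENNReal.ofReal (g s) := mul_le_mul_right step1 _
      _ = ∫⁻ s in Set.Ioc 0 t, ENNReal.ofReal (w t) *
            (ENNReal.ofReal (f (t - s)) * ENNReal.ofReal (g s)) := by
          have hm : Measurable fun s : ℝ => ENNReal.ofReal (f (t - s)) * ENNReal.ofReal (g s) := by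
            fun_prop
          rw [lintegral_const_mul _ hm]
      _ = ∫⁻ s, K (t, s) := by
          rw [← lintegral_indicator measurableSet_Ioc]
          refine lintegral_congr fun s => ?_
          by_cases hs : s ∈ Set.Ioc 0 t
          · rw [Set.indicator_of_mem hs, hK, Set.indicator_of_mem (by exact hs)]
          · rw [hK, Set.indicator_of_notMem (show (t, s) ∉ D from fun hmem => hs hmem),
              Set.indicator_of_notMem hs]
  -- Step B : swap
  have hB : ∫⁻ t, ∫⁻ s, K (t, s) = ∫⁻ s, ∫⁻ t, K (t, s) :=
    lintegral_lintegral_swap hKm.aemeasurable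
  -- Step C
  have hC : ∫⁻ s, ∫⁻ t, K (t, s) ≤ ∫⁻ s in Set.Ioi 0, ENNReal.ofReal (g s) *
      ∫⁻ u in Set.Ioi 0, ENNReal.ofReal (w (u + s) * f u) := by
    rw [← lintegral_indicator measurableSet_Ioi]
    refine lintegral_mono fun s => ?_
    by_cases hs : s ∈ Set.Ioi (0:ℝ)
    swap
    · have hz : (fun t => K (t, s)) = fun _ => 0 := by
        funext t
        rw [hK, Set.indicator_of_notMem]
        intro hmem
        exact hs hmem.1
      rw [hz]
      simp
    rw [Set.indicator_of_mem hs]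
    have hs0 : 0 < s := hs
    have hfun : (fun t => K (t, s)) = (Set.Ici s).indicator
        (fun t => ENNReal.ofReal (w t * f (t - s)) * ENNReal.ofReal (g s)) := by
      funext t
      by_cases hts : s ≤ t
      · rw [hK, Set.indicator_of_mem (by exact ⟨hs0, hts⟩),
          Set.indicator_of_mem (Set.mem_Ici.2 hts),
          ENNReal.ofReal_mul (hwnn t (lt_of_lt_of_le hs0 hts)), mul_assoc]
      · rw [hK, Set.indicator_of_notMem (show (t, s) ∉ D from fun hmem => hts hmem.2),
          Set.indicator_of_notMem (show t ∉ Set.Ici s from fun hmem => hts hmem)]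
    have htrans : ∫⁻ t in Set.Ici s, ENNReal.ofReal (w t * f (t - s))
        = ∫⁻ u in Set.Ioi 0, ENNReal.ofReal (w (u + s) * f u) := by
      rw [← lintegral_indicator measurableSet_Ici]
      rw [← lintegral_add_right_eq_self
        (fun t => (Set.Ici s).indicator (fun t => ENNReal.ofReal (w t * f (t - s))) t) s]
      have heq : ∀ u, (Set.Ici s).indicator (fun t => ENNReal.ofReal (w t * f (t - s))) (u + s)
          = (Set.Ici (0:ℝ)).indicator (fun u => ENNReal.ofReal (w (u + s) * f u)) u := by
        intro u
        by_cases hu : 0 ≤ u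
        · rw [Set.indicator_of_mem (Set.mem_Ici.2 (le_add_of_nonneg_left hu)),
            Set.indicator_of_mem (Set.mem_Ici.2 hu), add_sub_cancel_right]
        · rw [Set.indicator_of_notMem
              (show u + s ∉ Set.Ici s from fun h => hu (by
                have h2 := Set.mem_Ici.1 h; linarith)),
            Set.indicator_of_notMem (show u ∉ Set.Ici (0:ℝ) from fun h => hu (Set.mem_Ici.1 h))]
      rw [lintegral_congr heq, lintegral_indicator measurableSet_Ici,
        ← Measure.restrict_congr_set Ioi_ae_eq_Ici]
    refine le_of_eq ?_
    calc ∫⁻ t, K (t, s) = ∫⁻ t in Set.Ici s,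
          ENNReal.ofReal (w t * f (t - s)) * ENNReal.ofReal (g s) := by
          rw [hfun, lintegral_indicator measurableSet_Ici]
      _ = (∫⁻ t in Set.Ici s, ENNReal.ofReal (w t * f (t - s))) * ENNReal.ofReal (g s) := by
          have hm : Measurable fun t : ℝ => ENNReal.ofReal (w t * f (t - s)) := by fun_prop
          rw [lintegral_mul_const _ hm]
      _ = ENNReal.ofReal (g s) * ∫⁻ u in Set.Ioi 0, ENNReal.ofReal (w (u + s) * f u) := by
          rw [htrans, mul_comm]
  exact hA.trans (hB.le.trans hC)

private lemma rpow_add_le' {u s a b q : ℝ} (hu : 0 ≤ u) (hs : 0 ≤ s) (ha : 0 < a) (hb : 0 < b)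
    (hab : a + b = 1) (hq : 1 ≤ q) :
    (u + s) ^ q ≤ a ^ (1 - q) * u ^ q + b ^ (1 - q) * s ^ q := by
  have hc := (convexOn_rpow hq).2 (Set.mem_Ici.2 (div_nonneg hu ha.le))
    (Set.mem_Ici.2 (div_nonneg hs hb.le)) ha.le hb.le hab
  simp only [smul_eq_mul] at hc
  have he : a * (u / a) + b * (s / b) = u + s := by field_simp
  rw [he] at hc
  calc (u + s) ^ q ≤ a * (u / a) ^ q + b * (s / b) ^ q := hc
    _ = a ^ (1 - q) * u ^ q + b ^ (1 - q) * s ^ q := by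
        rw [Real.div_rpow hu ha.le, Real.div_rpow hs hb.le, Real.rpow_sub ha,
          Real.rpow_sub hb, Real.rpow_one, Real.rpow_one]
        ring

private lemma arith' {x q : ℝ} (hx : 0 < x) (hq : 1 ≤ q) :
    (1 / (x + 1)) ^ (1 - q) + (x / (x + 1)) ^ (1 - q) * x ^ q = (x + 1) ^ q := by
  have hx1 : (0:ℝ) < x + 1 := by linarith
  have h1 : (0:ℝ) < x ^ q := Real.rpow_pos_of_pos hx q
  have h2 : (0:ℝ) < (x + 1) ^ q := Real.rpow_pos_of_pos hx1 q
  rw [Real.div_rpow zero_le_one hx1.le, Real.div_rpow hx.le hx1.le, Real.one_rpow,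
    Real.rpow_sub hx1, Real.rpow_sub hx, Real.rpow_one, Real.rpow_one]
  field_simp
  ring

private lemma mass_le {φ g : ℝ → ℝ} (hφm : Measurable φ) (hφnn : ∀ s, 0 ≤ φ s)
    (hgm : Measurable g) (hgnn : ∀ s, 0 ≤ g s) :
    ∫⁻ t in Set.Ioi 0, ENNReal.ofReal (conv φ g t)
      ≤ (∫⁻ u in Set.Ioi 0, ENNReal.ofReal (φ u)) * ∫⁻ s in Set.Ioi 0, ENNReal.ofReal (g s) := by
  have h := conv_lint_le (w := fun _ => (1:ℝ)) measurable_const (fun _ _ => zero_le_one)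
    hφm hφnn hgm hgnn
  simp only [one_mul] at h
  refine le_trans h (le_of_eq ?_)
  rw [lintegral_mul_const _ (hgm.ennreal_ofReal), mul_comm]

private lemma moment_step {φ g : ℝ → ℝ} {q a b : ℝ} (hq : 1 ≤ q) (ha : 0 < a) (hb : 0 < b)
    (hab : a + b = 1) (hφm : Measurable φ) (hφnn : ∀ s, 0 ≤ φ s)
    (hgm : Measurable g) (hgnn : ∀ s, 0 ≤ g s) :
    ∫⁻ t in Set.Ioi 0, ENNReal.ofReal (t ^ q * conv φ g t)
      ≤ ENNReal.ofReal (a ^ (1 - q)) * (∫⁻ u in Set.Ioi 0, ENNReal.ofReal (u ^ q * φ u)) *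
          (∫⁻ s in Set.Ioi 0, ENNReal.ofReal (g s))
        + ENNReal.ofReal (b ^ (1 - q)) * (∫⁻ u in Set.Ioi 0, ENNReal.ofReal (φ u)) *
          (∫⁻ s in Set.Ioi 0, ENNReal.ofReal (s ^ q * g s)) := by
  set Mq := ∫⁻ u in Set.Ioi 0, ENNReal.ofReal (u ^ q * φ u) with hMq
  set L := ∫⁻ u in Set.Ioi 0, ENNReal.ofReal (φ u) with hL
  have hq0 : (0:ℝ) ≤ q := le_trans zero_le_one hq
  have hwm : Measurable fun t : ℝ => t ^ q := (Real.continuous_rpow_const hq0).measurable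
  have hMqm : Measurable fun u : ℝ => ENNReal.ofReal (u ^ q * φ u) :=
    (hwm.mul hφm).ennreal_ofReal
  have inner : ∀ s : ℝ, 0 < s → (∫⁻ u in Set.Ioi 0, ENNReal.ofReal ((u + s) ^ q * φ u))
      ≤ ENNReal.ofReal (a ^ (1 - q)) * Mq + ENNReal.ofReal (b ^ (1 - q) * s ^ q) * L := by
    intro s hs
    calc ∫⁻ u in Set.Ioi 0, ENNReal.ofReal ((u + s) ^ q * φ u)
        ≤ ∫⁻ u in Set.Ioi 0, (ENNReal.ofReal (a ^ (1 - q)) * ENNReal.ofReal (u ^ q * φ u)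
            + ENNReal.ofReal (b ^ (1 - q) * s ^ q) * ENNReal.ofReal (φ u)) := by
          refine setLIntegral_mono' measurableSet_Ioi fun u hu => ?_
          have hu0 : (0:ℝ) < u := hu
          have h2 := rpow_add_le' hu0.le hs.le ha hb hab hq
          have h3 : (u + s) ^ q * φ u
              ≤ (a ^ (1 - q) * u ^ q + b ^ (1 - q) * s ^ q) * φ u :=
            mul_le_mul_of_nonneg_right h2 (hφnn u)
          have key : (u + s) ^ q * φ u
              ≤ a ^ (1 - q) * (u ^ q * φ u) + (b ^ (1 - q) * s ^ q) * φ u := by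
            calc (u + s) ^ q * φ u ≤ (a ^ (1 - q) * u ^ q + b ^ (1 - q) * s ^ q) * φ u := h3
              _ = a ^ (1 - q) * (u ^ q * φ u) + (b ^ (1 - q) * s ^ q) * φ u := by ring
          calc ENNReal.ofReal ((u + s) ^ q * φ u)
              ≤ ENNReal.ofReal (a ^ (1 - q) * (u ^ q * φ u) + (b ^ (1 - q) * s ^ q) * φ u) :=
                ENNReal.ofReal_le_ofReal key
            _ = ENNReal.ofReal (a ^ (1 - q)) * ENNReal.ofReal (u ^ q * φ u)
                + ENNReal.ofReal (b ^ (1 - q) * s ^ q) * ENNReal.ofReal (φ u) := by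
                rw [ENNReal.ofReal_add (mul_nonneg (Real.rpow_nonneg ha.le _)
                    (mul_nonneg (Real.rpow_nonneg hu0.le _) (hφnn u)))
                    (mul_nonneg (mul_nonneg (Real.rpow_nonneg hb.le _)
                    (Real.rpow_nonneg hs.le _)) (hφnn u)),
                  ENNReal.ofReal_mul (Real.rpow_nonneg ha.le _),
                  ENNReal.ofReal_mul (mul_nonneg (Real.rpow_nonneg hb.le _)
                    (Real.rpow_nonneg hs.le _))]
      _ = ENNReal.ofReal (a ^ (1 - q)) * Mq + ENNReal.ofReal (b ^ (1 - q) * s ^ q) * L := by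
          rw [lintegral_add_left (hMqm.const_mul _),
            lintegral_const_mul _ hMqm, lintegral_const_mul _ (hφm.ennreal_ofReal)]
  calc ∫⁻ t in Set.Ioi 0, ENNReal.ofReal (t ^ q * conv φ g t)
      ≤ ∫⁻ s in Set.Ioi 0, ENNReal.ofReal (g s) *
          ∫⁻ u in Set.Ioi 0, ENNReal.ofReal ((u + s) ^ q * φ u) :=
        conv_lint_le hwm (fun t ht => Real.rpow_nonneg ht.le q) hφm hφnn hgm hgnn
    _ ≤ ∫⁻ s in Set.Ioi 0, ENNReal.ofReal (g s) *
          (ENNReal.ofReal (a ^ (1 - q)) * Mq + ENNReal.ofReal (b ^ (1 - q) * s ^ q) * L) :=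
        setLIntegral_mono' measurableSet_Ioi fun s hs => mul_le_mul_right (inner s hs) _
    _ = ∫⁻ s in Set.Ioi 0, (ENNReal.ofReal (g s) * (ENNReal.ofReal (a ^ (1 - q)) * Mq)
          + (ENNReal.ofReal (b ^ (1 - q)) * L) * ENNReal.ofReal (s ^ q * g s)) := by
        refine setLIntegral_congr_fun measurableSet_Ioi
          (fun s hs => ?_)
        have hs0 : (0:ℝ) < s := hs
        rw [ENNReal.ofReal_mul (Real.rpow_nonneg hb.le _),
          ENNReal.ofReal_mul (Real.rpow_nonneg hs0.le q)]
        ring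
    _ = (∫⁻ s in Set.Ioi 0, ENNReal.ofReal (g s)) * (ENNReal.ofReal (a ^ (1 - q)) * Mq)
          + (ENNReal.ofReal (b ^ (1 - q)) * L) *
            ∫⁻ s in Set.Ioi 0, ENNReal.ofReal (s ^ q * g s) := by
        rw [lintegral_add_left ((hgm.ennreal_ofReal).mul_const _),
          lintegral_mul_const _ (hgm.ennreal_ofReal),
          lintegral_const_mul _ (show Measurable fun s : ℝ => ENNReal.ofReal (s ^ q * g s) from (hwm.mul hgm).ennreal_ofReal)]
    _ = _ := by ring

/-- If Λ = ∫_0^∞ φ < ∞ and ∫_0^∞ s^q φ(s) ds < ∞ for some q ≥ 1, then there exists a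
constant C (depending only on φ and q) such that for all n ≥ 1 and r ≥ 1,
∫_r^∞ √s φ^{*n}(s) ds ≤ C Λ^n n^q r^{1/2−q}. -/
theorem stmt1 (φ : ℝ → ℝ) (q : ℝ) (hq : 1 ≤ q)
    (hφmeas : Measurable φ) (hφnn : ∀ s, 0 ≤ φ s) (hφ0 : ∀ s < (0:ℝ), φ s = 0)
    (hΛpos : 0 < ∫ s in Set.Ioi (0:ℝ), φ s)
    (hΛint : IntegrableOn φ (Set.Ioi 0))
    (hmom : IntegrableOn (fun s => s ^ q * φ s) (Set.Ioi 0)) :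
    ∃ C > 0, ∀ n : ℕ, 1 ≤ n → ∀ r : ℝ, 1 ≤ r →
      ∫ s in Set.Ioi r, Real.sqrt s * convIter φ n s ≤
        C * (∫ s in Set.Ioi (0:ℝ), φ s) ^ n * (n : ℝ) ^ q * r ^ ((1:ℝ) / 2 - q) := by
  set Λ : ℝ := ∫ s in Set.Ioi (0:ℝ), φ s with hΛdef
  set M : ℝ := ∫ s in Set.Ioi (0:ℝ), s ^ q * φ s with hMdef
  have hM0 : 0 ≤ M :=
    setIntegral_nonneg measurableSet_Ioi fun s hs =>
      mul_nonneg (Real.rpow_nonneg (le_of_lt hs) q) (hφnn s)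
  set L : ℝ≥0∞ := ENNReal.ofReal Λ with hLdef
  have hq0 : (0:ℝ) ≤ q := le_trans zero_le_one hq
  have hwm : Measurable fun t : ℝ => t ^ q := (Real.continuous_rpow_const hq0).measurable
  have hLint : ∫⁻ u in Set.Ioi (0:ℝ), ENNReal.ofReal (φ u) = L :=
    (ofReal_integral_eq_lintegral_ofReal hΛint
      (Filter.Eventually.of_forall fun s => hφnn s)).symm
  have hMeq : ∫⁻ u in Set.Ioi (0:ℝ), ENNReal.ofReal (u ^ q * φ u) = ENNReal.ofReal M :=
    (ofReal_integral_eq_lintegral_ofReal hmom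
      ((ae_restrict_mem measurableSet_Ioi).mono fun u hu =>
        mul_nonneg (Real.rpow_nonneg (le_of_lt hu) q) (hφnn u))).symm
  -- the key induction
  have key : ∀ n : ℕ, 1 ≤ n →
      (∫⁻ s in Set.Ioi (0:ℝ), ENNReal.ofReal (convIter φ n s)) ≤ L ^ n ∧
      (∫⁻ s in Set.Ioi (0:ℝ), ENNReal.ofReal (s ^ q * convIter φ n s))
        ≤ ENNReal.ofReal M * L ^ (n - 1) * ENNReal.ofReal ((n : ℝ) ^ q) := by
    intro n hn
    induction n, hn using Nat.le_induction with
    | base =>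
      constructor
      · rw [show convIter φ 1 = φ from rfl, hLint, pow_one]
      · rw [show convIter φ 1 = φ from rfl, hMeq]
        simp [Real.one_rpow]
    | succ n hn ih =>
      obtain ⟨m, rfl⟩ : ∃ m, n = m + 1 := ⟨n - 1, (Nat.succ_pred_eq_of_pos hn).symm⟩
      have hconv : convIter φ (m + 1 + 1) = conv φ (convIter φ (m + 1)) := rfl
      have hgm : Measurable (convIter φ (m + 1)) := convIter_meas hφmeas (m + 1)
      have hgnn : ∀ s, 0 ≤ convIter φ (m + 1) s := convIter_nonneg hφnn (m + 1)
      constructor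
      · rw [hconv]
        refine (mass_le hφmeas hφnn hgm hgnn).trans ?_
        rw [hLint]
        calc L * ∫⁻ s in Set.Ioi (0:ℝ), ENNReal.ofReal (convIter φ (m+1) s)
            ≤ L * L ^ (m + 1) := mul_le_mul_right ih.1 _
          _ = L ^ (m + 1 + 1) := by ring
      · rw [hconv]
        set x : ℝ := ((m + 1 : ℕ) : ℝ) with hxdef
        have hx0 : (0:ℝ) < x := by positivity
        have hx1 : (0:ℝ) < x + 1 := by linarith
        have ha : (0:ℝ) < 1 / (x + 1) := by positivity
        have hb : (0:ℝ) < x / (x + 1) := by positivity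
        have hab : 1 / (x + 1) + x / (x + 1) = 1 := by field_simp; ring
        have step := moment_step (φ := φ) (g := convIter φ (m + 1)) hq ha hb hab
          hφmeas hφnn hgm hgnn
        rw [hLint, hMeq] at step
        refine step.trans ?_
        have h1 : ENNReal.ofReal ((1 / (x + 1)) ^ (1 - q)) * ENNReal.ofReal M *
              (∫⁻ s in Set.Ioi (0:ℝ), ENNReal.ofReal (convIter φ (m+1) s))
            ≤ ENNReal.ofReal ((1 / (x + 1)) ^ (1 - q)) * ENNReal.ofReal M * L ^ (m + 1) :=
          mul_le_mul_right ih.1 _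
        have h2 : ENNReal.ofReal ((x / (x + 1)) ^ (1 - q)) * L *
              (∫⁻ s in Set.Ioi (0:ℝ), ENNReal.ofReal (s ^ q * convIter φ (m+1) s))
            ≤ ENNReal.ofReal ((x / (x + 1)) ^ (1 - q)) * L *
              (ENNReal.ofReal M * L ^ (m + 1 - 1) * ENNReal.ofReal ((↑(m+1) : ℝ) ^ q)) :=
          mul_le_mul_right ih.2 _
        refine (add_le_add h1 h2).trans (le_of_eq ?_)
        have hm1 : m + 1 - 1 = m := rfl
        rw [hm1]
        have hxq : ENNReal.ofReal ((↑(m+1) : ℝ) ^ q) = ENNReal.ofReal (x ^ q) := rfl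
        rw [hxq]
        have hLpow : L ^ (m + 1) = L ^ m * L := by ring
        have hcomb : ENNReal.ofReal ((1 / (x + 1)) ^ (1 - q))
              + ENNReal.ofReal ((x / (x + 1)) ^ (1 - q)) * ENNReal.ofReal (x ^ q)
            = ENNReal.ofReal ((x + 1) ^ q) := by
          rw [← ENNReal.ofReal_mul (Real.rpow_nonneg hb.le _),
            ← ENNReal.ofReal_add (Real.rpow_nonneg ha.le _)
              (mul_nonneg (Real.rpow_nonneg hb.le _) (Real.rpow_nonneg hx0.le _)),
            arith' hx0 hq]
        have hbase : ((↑(m + 1 + 1) : ℕ) : ℝ) = x + 1 := by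
          rw [hxdef]; push_cast; ring
        have hcast : ((↑(m + 1 + 1) : ℝ)) ^ q = (x + 1) ^ q := by rw [hbase]
        calc ENNReal.ofReal ((1 / (x + 1)) ^ (1 - q)) * ENNReal.ofReal M * L ^ (m + 1)
              + ENNReal.ofReal ((x / (x + 1)) ^ (1 - q)) * L *
                (ENNReal.ofReal M * L ^ m * ENNReal.ofReal (x ^ q))
            = ENNReal.ofReal M * L ^ (m + 1) *
                (ENNReal.ofReal ((1 / (x + 1)) ^ (1 - q))
                  + ENNReal.ofReal ((x / (x + 1)) ^ (1 - q)) * ENNReal.ofReal (x ^ q)) := by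
              rw [hLpow]; ring
          _ = ENNReal.ofReal M * L ^ (m + 1 + 1 - 1) * ENNReal.ofReal ((↑(m + 1 + 1) : ℝ) ^ q) := by
              rw [hcomb, hcast]
              rfl
  -- final assembly
  refine ⟨M / Λ + 1, by positivity, ?_⟩
  intro n hn r hr
  have hr0 : (0:ℝ) < r := lt_of_lt_of_le one_pos hr
  have hgm : Measurable (convIter φ n) := convIter_meas hφmeas n
  have hgnn : ∀ s, 0 ≤ convIter φ n s := convIter_nonneg hφnn n
  have key_n := (key n hn).2
  have hE : (0:ℝ) ≤ r ^ ((1:ℝ) / 2 - q) := Real.rpow_nonneg hr0.le _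
  have hfm : Measurable fun s : ℝ => Real.sqrt s * convIter φ n s :=
    Real.continuous_sqrt.measurable.mul hgm
  have hptw : ∀ s ∈ Set.Ioi r, ENNReal.ofReal (Real.sqrt s * convIter φ n s)
      ≤ ENNReal.ofReal (r ^ ((1:ℝ) / 2 - q)) * ENNReal.ofReal (s ^ q * convIter φ n s) := by
    intro s hs
    have hrs : r < s := hs
    have hs0 : (0:ℝ) < s := lt_trans hr0 hrs
    have hsqrt : Real.sqrt s = s ^ ((1:ℝ) / 2 - q) * s ^ q := by
      rw [Real.sqrt_eq_rpow, ← Real.rpow_add hs0]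
      norm_num
    have hanti : s ^ ((1:ℝ) / 2 - q) ≤ r ^ ((1:ℝ) / 2 - q) :=
      Real.antitoneOn_rpow_Ioi_of_exponent_nonpos (by linarith)
        (Set.mem_Ioi.2 hr0) (Set.mem_Ioi.2 hs0) hrs.le
    have hle : Real.sqrt s * convIter φ n s
        ≤ r ^ ((1:ℝ) / 2 - q) * (s ^ q * convIter φ n s) := by
      rw [hsqrt]
      have := mul_le_mul_of_nonneg_right hanti
        (mul_nonneg (Real.rpow_nonneg hs0.le q) (hgnn s))
      calc s ^ ((1:ℝ) / 2 - q) * s ^ q * convIter φ n s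
          = s ^ ((1:ℝ) / 2 - q) * (s ^ q * convIter φ n s) := by ring
        _ ≤ r ^ ((1:ℝ) / 2 - q) * (s ^ q * convIter φ n s) := this
    calc ENNReal.ofReal (Real.sqrt s * convIter φ n s)
        ≤ ENNReal.ofReal (r ^ ((1:ℝ) / 2 - q) * (s ^ q * convIter φ n s)) :=
          ENNReal.ofReal_le_ofReal hle
      _ = _ := ENNReal.ofReal_mul hE
  have hB : ∫⁻ s in Set.Ioi r, ENNReal.ofReal (Real.sqrt s * convIter φ n s)
      ≤ ENNReal.ofReal (r ^ ((1:ℝ) / 2 - q)) *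
        (ENNReal.ofReal M * L ^ (n - 1) * ENNReal.ofReal ((n : ℝ) ^ q)) := by
    calc ∫⁻ s in Set.Ioi r, ENNReal.ofReal (Real.sqrt s * convIter φ n s)
        ≤ ∫⁻ s in Set.Ioi r, ENNReal.ofReal (r ^ ((1:ℝ) / 2 - q)) *
            ENNReal.ofReal (s ^ q * convIter φ n s) :=
          setLIntegral_mono' measurableSet_Ioi hptw
      _ = ENNReal.ofReal (r ^ ((1:ℝ) / 2 - q)) *
            ∫⁻ s in Set.Ioi r, ENNReal.ofReal (s ^ q * convIter φ n s) := by
          rw [lintegral_const_mul _ (show Measurable fun s : ℝ => ENNReal.ofReal (s ^ q * convIter φ n s) from (hwm.mul hgm).ennreal_ofReal)]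
      _ ≤ ENNReal.ofReal (r ^ ((1:ℝ) / 2 - q)) *
            ∫⁻ s in Set.Ioi (0:ℝ), ENNReal.ofReal (s ^ q * convIter φ n s) :=
          mul_le_mul_right (lintegral_mono_set (Set.Ioi_subset_Ioi hr0.le)) _
      _ ≤ _ := mul_le_mul_right key_n _
  have hfin : ENNReal.ofReal (r ^ ((1:ℝ) / 2 - q)) *
      (ENNReal.ofReal M * L ^ (n - 1) * ENNReal.ofReal ((n : ℝ) ^ q)) ≠ ⊤ := by
    refine ENNReal.mul_ne_top ENNReal.ofReal_ne_top ?_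
    exact ENNReal.mul_ne_top
      (ENNReal.mul_ne_top ENNReal.ofReal_ne_top (ENNReal.pow_ne_top ENNReal.ofReal_ne_top))
      ENNReal.ofReal_ne_top
  have hnonneg : (0 : ℝ → ℝ) ≤ᵐ[volume.restrict (Set.Ioi r)]
      fun s => Real.sqrt s * convIter φ n s :=
    Filter.Eventually.of_forall (fun s => by exact mul_nonneg (Real.sqrt_nonneg s) (hgnn s))
  rw [integral_eq_lintegral_of_nonneg_ae hnonneg hfm.aestronglyMeasurable]
  have htr := ENNReal.toReal_mono hfin hB
  refine le_trans htr ?_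
  have hNq : (0:ℝ) ≤ (n : ℝ) ^ q := Real.rpow_nonneg (Nat.cast_nonneg n) q
  rw [ENNReal.toReal_mul, ENNReal.toReal_mul, ENNReal.toReal_mul, ENNReal.toReal_pow,
    ENNReal.toReal_ofReal hE, ENNReal.toReal_ofReal hM0, ENNReal.toReal_ofReal hΛpos.le,
    ENNReal.toReal_ofReal hNq]
  -- now pure real arithmetic
  have h1 : M * Λ ^ (n - 1) ≤ (M / Λ + 1) * Λ ^ n := by
    obtain ⟨m, rfl⟩ : ∃ m, n = m + 1 := ⟨n - 1, (Nat.succ_pred_eq_of_pos hn).symm⟩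
    have hm1 : m + 1 - 1 = m := rfl
    rw [hm1, pow_succ]
    have hexp : (M / Λ + 1) * (Λ ^ m * Λ) = M * Λ ^ m + Λ ^ (m + 1) := by
      field_simp
      ring
    rw [hexp]
    have : (0:ℝ) ≤ Λ ^ (m + 1) := by positivity
    linarith
  calc r ^ ((1:ℝ) / 2 - q) * (M * Λ ^ (n - 1) * (n : ℝ) ^ q)
      = (M * Λ ^ (n - 1)) * ((n : ℝ) ^ q * r ^ ((1:ℝ) / 2 - q)) := by ring
    _ ≤ ((M / Λ + 1) * Λ ^ n) * ((n : ℝ) ^ q * r ^ ((1:ℝ) / 2 - q)) :=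
        mul_le_mul_of_nonneg_right h1 (mul_nonneg hNq hE)
    _ = (M / Λ + 1) * Λ ^ n * (n : ℝ) ^ q * r ^ ((1:ℝ) / 2 - q) := by ring
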